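/- arXiv:1106.4377 — 2 statements merged into one kernel-verified Lean document; each statement's English description precedes it below -/
import Mathlib

section
/- Let f be normalized analytic and univalent on 𝔻. Then f ∈ UST if and only if Re((f(z) − f(xz))/((1 − x)·z·f'(z))) ≥ 0 for every z ∈ 𝔻 with z ≠ 0 and every x ∈ ℂ with |x| = 1 and x ≠ 1. -/
open Complex Metric Set

noncomputable section

/-- The open unit disk in ℂ. -/
def unitDisk : Set ℂ := Metric.ball (0 : ℂ) 1

/-- `f` is normalized analytic on the unit disk: analytic there, `f 0 = 0`, `f' 0 = 1`. -/
def IsNormalized (f : ℂ → ℂ) : Prop :=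
  DifferentiableOn ℂ f unitDisk ∧ f 0 = 0 ∧ deriv f 0 = 1

/-- Uniformly starlike functions (two-variable characterization). -/
def IsUST (f : ℂ → ℂ) : Prop :=
  IsNormalized f ∧ Set.InjOn f unitDisk ∧
    ∀ z ∈ unitDisk, ∀ ζ ∈ unitDisk, z ≠ ζ →
      0 ≤ ((z - ζ) * deriv f z / (f z - f ζ)).re

/-- Uniformly convex functions (one-variable characterization). -/
def IsUCV (f : ℂ → ℂ) : Prop :=
  IsNormalized f ∧ Set.InjOn f unitDisk ∧
    ∀ z ∈ unitDisk,
      ‖z * deriv (deriv f) z / deriv f z‖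
        < (1 + z * deriv (deriv f) z / deriv f z).re

/-- Parabolic starlike functions. -/
def IsSP (f : ℂ → ℂ) : Prop :=
  IsNormalized f ∧
    ∀ z ∈ unitDisk, z ≠ 0 →
      ‖z * deriv f z / f z - 1‖ < (z * deriv f z / f z).re

/-- The `n`-th Taylor coefficient of `f` at the origin. -/
def taylorCoeff (f : ℂ → ℂ) (n : ℕ) : ℂ :=
  iteratedDeriv n f 0 / (n.factorial : ℂ)

/-- The real part of a quotient is nonneg iff that of the reciprocal quotient is. -/
lemma re_div_symm (a b : ℂ) : 0 ≤ (a / b).re ↔ 0 ≤ (b / a).re := by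
  rcases eq_or_ne a 0 with rfl | ha
  · simp
  rcases eq_or_ne b 0 with rfl | hb
  · simp
  have h1 : 0 < Complex.normSq a := Complex.normSq_pos.mpr ha
  have h2 : 0 < Complex.normSq b := Complex.normSq_pos.mpr hb
  rw [Complex.div_re, Complex.div_re, ← add_div, ← add_div,
    le_div_iff₀ h2, le_div_iff₀ h1, zero_mul, zero_mul]
  constructor <;> intro h <;> nlinarith

/-- Minimum principle for the real part of an analytic function on a closed ball. -/
lemma re_nonneg_of_boundary {F : ℂ → ℂ} {r : ℝ} (hr : 0 < r)
    (hF : DifferentiableOn ℂ F (Metric.closedBall 0 r))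
    (hb : ∀ w ∈ Metric.sphere (0 : ℂ) r, 0 ≤ (F w).re) :
    ∀ w ∈ Metric.closedBall (0 : ℂ) r, 0 ≤ (F w).re := by
  intro w hw
  have hG : DiffContOnCl ℂ (fun z => Complex.exp (-F z)) (Metric.ball (0 : ℂ) r) := by
    apply DifferentiableOn.diffContOnCl
    rw [closure_ball (0 : ℂ) hr.ne']
    exact hF.neg.cexp
  have key : ‖Complex.exp (-F w)‖ ≤ 1 := by
    apply Complex.norm_le_of_forall_mem_frontier_norm_le isBounded_ball hG
    · intro ζ hζ
      rw [frontier_ball (0 : ℂ) hr.ne'] at hζ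
      rw [Complex.norm_exp]
      rw [Real.exp_le_one_iff]
      simpa using hb ζ hζ
    · rwa [closure_ball (0 : ℂ) hr.ne']
  rw [Complex.norm_exp, Real.exp_le_one_iff] at key
  simpa using key

section Key

variable {f : ℂ → ℂ}

lemma mem_unitDisk_iff {w : ℂ} : w ∈ unitDisk ↔ ‖w‖ < 1 := by
  simp [unitDisk, mem_ball, Complex.dist_eq]

/-- Key step 1: the two-variable condition at `(z, ζ)` with `|z| ≤ |ζ|`,
assuming `deriv f ζ ≠ 0`. -/
lemma key1 (hd : DifferentiableOn ℂ f unitDisk) (hinj : Set.InjOn f unitDisk)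
    (hyp : ∀ z ∈ unitDisk, z ≠ 0 → ∀ x : ℂ, ‖x‖ = 1 → x ≠ 1 →
        0 ≤ ((f z - f (x * z)) / ((1 - x) * z * deriv f z)).re)
    {z ζ : ℂ} (hζ : ζ ∈ unitDisk) (hzζ : ‖z‖ ≤ ‖ζ‖)
    (hne : z ≠ ζ) (hζ0 : ζ ≠ 0) (hfζ : deriv f ζ ≠ 0) :
    0 ≤ ((z - ζ) * deriv f z / (f z - f ζ)).re := by
  have hU : IsOpen unitDisk := isOpen_ball
  set g : ℂ → ℂ := dslope f ζ with hgdef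
  have hg : DifferentiableOn ℂ g unitDisk :=
    (differentiableOn_dslope (hU.mem_nhds hζ)).mpr hd
  have hderiv : DifferentiableOn ℂ (deriv f) unitDisk :=
    ((hd.analyticOnNhd hU).deriv).differentiableOn
  have hgne : ∀ w ∈ unitDisk, g w ≠ 0 := by
    intro w hw
    rcases eq_or_ne w ζ with rfl | hwζ
    · rwa [hgdef, dslope_same]
    · rw [hgdef, dslope_of_ne f hwζ, slope_def_field]
      exact div_ne_zero (sub_ne_zero.mpr fun he => hwζ (hinj hw hζ he))
        (sub_ne_zero.mpr hwζ)
  set H : ℂ → ℂ := fun w => deriv f w / g w with hHdef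
  have hH : DifferentiableOn ℂ H unitDisk := hderiv.div hg hgne
  set r : ℝ := ‖ζ‖ with hrdef
  have hr : 0 < r := norm_pos_iff.mpr hζ0
  have hsub : Metric.closedBall (0 : ℂ) r ⊆ unitDisk := by
    intro w hw
    rw [mem_closedBall, Complex.dist_eq, sub_zero] at hw
    exact mem_unitDisk_iff.mpr (lt_of_le_of_lt hw (mem_unitDisk_iff.mp hζ))
  have Hform : ∀ w : ℂ, w ≠ ζ → H w = (w - ζ) * deriv f w / (f w - f ζ) := by
    intro w hwζ
    rw [hHdef]
    simp only
    rw [hgdef, dslope_of_ne f hwζ, slope_def_field, div_div_eq_mul_div, mul_comm]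
  have hbound : ∀ w ∈ Metric.sphere (0 : ℂ) r, 0 ≤ (H w).re := by
    intro w hws
    have hwa : ‖w‖ = r := by
      rw [mem_sphere, Complex.dist_eq, sub_zero] at hws
      exact hws
    rcases eq_or_ne w ζ with rfl | hwζ
    · rw [hHdef]
      simp only
      rw [hgdef, dslope_same, div_self hfζ]
      norm_num
    · have hw0 : w ≠ 0 := by
        intro h
        rw [h, norm_zero] at hwa
        exact hr.ne hwa
      have hwd : w ∈ unitDisk := hsub (by
        rw [mem_closedBall, Complex.dist_eq, sub_zero, hwa])
      set x : ℂ := ζ / w with hxdef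
      have hx1 : ‖x‖ = 1 := by
        rw [hxdef, norm_div, ← hrdef, hwa, div_self hr.ne']
      have hxne : x ≠ 1 := by
        intro h
        rw [hxdef, div_eq_one_iff_eq hw0] at h
        exact hwζ h.symm
      have h := hyp w hwd hw0 x hx1 hxne
      have hxw : x * w = ζ := div_mul_cancel₀ ζ hw0
      have hxx : (1 - x) * w = w - ζ := by rw [sub_mul, one_mul, hxw]
      rw [hxw, hxx] at h
      rw [Hform w hwζ]
      exact (re_div_symm _ _).mp h
  have hmain := re_nonneg_of_boundary hr (hH.mono hsub) hbound z
    (by rw [mem_closedBall, Complex.dist_eq, sub_zero]; exact hzζ)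
  rwa [Hform z hne] at hmain

/-- Key step 2: the two-variable condition at `(z, ζ)` with `|ζ| ≤ |z|`,
assuming `deriv f z ≠ 0`. -/
lemma key2 (hd : DifferentiableOn ℂ f unitDisk) (hinj : Set.InjOn f unitDisk)
    (hyp : ∀ z ∈ unitDisk, z ≠ 0 → ∀ x : ℂ, ‖x‖ = 1 → x ≠ 1 →
        0 ≤ ((f z - f (x * z)) / ((1 - x) * z * deriv f z)).re)
    {z ζ : ℂ} (hz : z ∈ unitDisk) (hzζ : ‖ζ‖ ≤ ‖z‖)
    (hne : z ≠ ζ) (hz0 : z ≠ 0) (hfz : deriv f z ≠ 0) :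
    0 ≤ ((z - ζ) * deriv f z / (f z - f ζ)).re := by
  have hU : IsOpen unitDisk := isOpen_ball
  set g : ℂ → ℂ := dslope f z with hgdef
  have hg : DifferentiableOn ℂ g unitDisk :=
    (differentiableOn_dslope (hU.mem_nhds hz)).mpr hd
  have hgne : ∀ w ∈ unitDisk, g w ≠ 0 := by
    intro w hw
    rcases eq_or_ne w z with rfl | hwz
    · rwa [hgdef, dslope_same]
    · rw [hgdef, dslope_of_ne f hwz, slope_def_field]
      exact div_ne_zero (sub_ne_zero.mpr fun he => hwz (hinj hw hz he))
        (sub_ne_zero.mpr hwz)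
  set K : ℂ → ℂ := fun w => deriv f z / g w with hKdef
  have hK : DifferentiableOn ℂ K unitDisk := (differentiableOn_const _).div hg hgne
  set r : ℝ := ‖z‖ with hrdef
  have hr : 0 < r := norm_pos_iff.mpr hz0
  have hsub : Metric.closedBall (0 : ℂ) r ⊆ unitDisk := by
    intro w hw
    rw [mem_closedBall, Complex.dist_eq, sub_zero] at hw
    exact mem_unitDisk_iff.mpr (lt_of_le_of_lt hw (mem_unitDisk_iff.mp hz))
  have Kform : ∀ w : ℂ, w ≠ z → K w = (z - w) * deriv f z / (f z - f w) := by
    intro w hwz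
    rw [hKdef]
    simp only
    rw [hgdef, dslope_of_ne f hwz, slope_def_field, div_div_eq_mul_div,
      show z - w = -(w - z) by ring, show f z - f w = -(f w - f z) by ring,
      neg_mul, neg_div_neg_eq, mul_comm]
  have hbound : ∀ w ∈ Metric.sphere (0 : ℂ) r, 0 ≤ (K w).re := by
    intro w hws
    have hwa : ‖w‖ = r := by
      rw [mem_sphere, Complex.dist_eq, sub_zero] at hws
      exact hws
    rcases eq_or_ne w z with rfl | hwz
    · rw [hKdef]
      simp only
      rw [hgdef, dslope_same, div_self hfz]
      norm_num
    · set x : ℂ := w / z with hxdef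
      have hx1 : ‖x‖ = 1 := by
        rw [hxdef, norm_div, ← hrdef, hwa, div_self hr.ne']
      have hxne : x ≠ 1 := by
        intro h
        rw [hxdef, div_eq_one_iff_eq hz0] at h
        exact hwz h
      have h := hyp z hz hz0 x hx1 hxne
      have hxw : x * z = w := div_mul_cancel₀ w hz0
      have hxx : (1 - x) * z = z - w := by rw [sub_mul, one_mul, hxw]
      rw [hxw, hxx] at h
      rw [Kform w hwz]
      exact (re_div_symm _ _).mp h
  have hmain := re_nonneg_of_boundary hr (hK.mono hsub) hbound ζ
    (by rw [mem_closedBall, Complex.dist_eq, sub_zero]; exact hzζ)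
  rwa [Kform ζ (fun h => hne h.symm)] at hmain

end Key

/-- Rønning's one-variable characterization of uniformly starlike functions. -/
theorem ust_one_variable_characterization (f : ℂ → ℂ) (hf : IsNormalized f)
    (hinj : Set.InjOn f unitDisk) :
    IsUST f ↔
      ∀ z ∈ unitDisk, z ≠ 0 → ∀ x : ℂ, ‖x‖ = 1 → x ≠ 1 →
        0 ≤ ((f z - f (x * z)) / ((1 - x) * z * deriv f z)).re := by
  have hU : IsOpen unitDisk := isOpen_ball
  have hd : DifferentiableOn ℂ f unitDisk := hf.1
  constructor
  · intro h z hz hz0 x hx hx1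
    have hxz : x * z ∈ unitDisk := by
      rw [mem_unitDisk_iff, norm_mul, hx, one_mul]
      exact mem_unitDisk_iff.mp hz
    have hne : z ≠ x * z := by
      intro he
      apply hx1
      have : x * z = 1 * z := by rw [one_mul, ← he]
      exact mul_right_cancel₀ hz0 this
    have h2 := h.2.2 z hz (x * z) hxz hne
    have hxx : (z - x * z) * deriv f z = (1 - x) * z * deriv f z := by ring
    rw [hxx] at h2
    exact (re_div_symm _ _).mp h2
  · intro hyp
    refine ⟨hf, hinj, ?_⟩
    intro z hz ζ hζ hne
    rcases lt_trichotomy (‖z‖) (‖ζ‖) with hlt | heq | hgt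
    · -- |z| < |ζ| : approximate ζ by points where deriv f ≠ 0
      have hfz_ne : f z - f ζ ≠ 0 := sub_ne_zero.mpr fun he => hne (hinj hz hζ he)
      have hfc : ContinuousAt f ζ := (hd.differentiableAt (hU.mem_nhds hζ)).continuousAt
      set φ : ℂ → ℝ := fun w => ((z - w) * deriv f z / (f z - f w)).re with hφdef
      have hφc : ContinuousAt φ ζ := by
        apply Complex.continuous_re.continuousAt.comp
        exact ContinuousAt.div
          (((continuousAt_const.sub continuousAt_id).mul continuousAt_const))
          (continuousAt_const.sub hfc) hfz_ne
      have e1 : ∀ᶠ w in nhds ζ, w ∈ unitDisk := hU.mem_nhds hζ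
      have e2 : ∀ᶠ w in nhds ζ, ‖z‖ < ‖w‖ := by
        have : IsOpen {w : ℂ | ‖z‖ < ‖w‖} :=
          isOpen_lt continuous_const continuous_norm
        exact this.mem_nhds hlt
      have e3 : ∀ᶠ w in nhdsWithin ζ {ζ}ᶜ, deriv f w ≠ 0 := by
        have ha : AnalyticAt ℂ (deriv f) ζ := (hd.analyticOnNhd hU).deriv ζ hζ
        rcases ha.eventually_eq_zero_or_eventually_ne_zero with h0 | h1
        · exfalso
          have hEq : deriv f =ᶠ[nhds ζ] 0 := by
            filter_upwards [h0] with w hw using hw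
          have := AnalyticOnNhd.eqOn_zero_of_preconnected_of_eventuallyEq_zero
            ((hd.analyticOnNhd hU).deriv) (convex_ball (0 : ℂ) 1).isPreconnected hζ hEq
          have h00 : deriv f 0 = 0 := this (mem_ball_self one_pos)
          rw [hf.2.2] at h00
          exact one_ne_zero h00
        · exact h1
      have hev : ∀ᶠ w in nhdsWithin ζ {ζ}ᶜ, 0 ≤ φ w := by
        filter_upwards [e3, (e1.and e2).filter_mono nhdsWithin_le_nhds] with w h3 h12
        obtain ⟨hw1, hw2⟩ := h12
        have hzw : z ≠ w := by
          intro he; rw [he] at hw2; exact lt_irrefl _ hw2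
        have hw0 : w ≠ 0 := by
          intro he
          rw [he, norm_zero] at hw2
          exact absurd hw2 (not_lt.mpr (norm_nonneg z))
        exact key1 hd hinj hyp hw1 hw2.le hzw hw0 h3
      have htend : Filter.Tendsto φ (nhdsWithin ζ {ζ}ᶜ) (nhds (φ ζ)) :=
        (hφc.continuousWithinAt : ContinuousWithinAt φ {ζ}ᶜ ζ)
      exact ge_of_tendsto htend hev
    · -- |z| = |ζ| : direct
      have hz0 : z ≠ 0 := by
        intro he
        rw [he, norm_zero] at heq
        exact hne (he.trans (norm_eq_zero.mp heq.symm).symm)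
      set x : ℂ := ζ / z with hxdef
      have hx1 : ‖x‖ = 1 := by
        rw [hxdef, norm_div, ← heq, div_self (norm_ne_zero_iff.mpr hz0)]
      have hxne : x ≠ 1 := by
        intro h
        rw [hxdef, div_eq_one_iff_eq hz0] at h
        exact hne h.symm
      have h := hyp z hz hz0 x hx1 hxne
      have hxw : x * z = ζ := div_mul_cancel₀ ζ hz0
      have hxx : (1 - x) * z = z - ζ := by rw [sub_mul, one_mul, hxw]
      rw [hxw, hxx] at h
      exact (re_div_symm _ _).mp h
    · -- |ζ| < |z|
      rcases eq_or_ne (deriv f z) 0 with hfz | hfz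
      · simp [hfz]
      · have hz0 : z ≠ 0 := by
          intro he
          rw [he, norm_zero] at hgt
          exact absurd hgt (not_lt.mpr (norm_nonneg ζ))
        exact key2 hd hinj hyp hz hgt.le hne hz0 hfz
end
end

section
/- Let A ∈ ℂ with |A| < 1 and let F(z) = z/(1 − Az). Then F ∈ UCV if and only if |A| ≤ 1/3. -/
open Complex Metric Set

noncomputable section

lemma mem_unitDisk {z : ℂ} : z ∈ unitDisk ↔ ‖z‖ < 1 := by
  simp [unitDisk, Metric.mem_ball, Complex.dist_eq]


lemma hasDerivAt_F (A z : ℂ) (hz : 1 - A * z ≠ 0) :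
    HasDerivAt (fun z => z / (1 - A * z)) (((1 - A * z) ^ 2)⁻¹) z := by
  have h1 : HasDerivAt (fun z : ℂ => 1 - A * z) (-A) z := by
    simpa using ((hasDerivAt_id z).const_mul A).const_sub 1
  have h := (hasDerivAt_id z).div h1 hz
  refine h.congr_deriv ?_
  simp only [id]
  field_simp
  ring

lemma hasDerivAt_F' (A z : ℂ) (hz : 1 - A * z ≠ 0) :
    HasDerivAt (fun z => ((1 - A * z) ^ 2)⁻¹) (2 * A * ((1 - A * z) ^ 3)⁻¹) z := by
  have h1 : HasDerivAt (fun z : ℂ => 1 - A * z) (-A) z := by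
    simpa using ((hasDerivAt_id z).const_mul A).const_sub 1
  have h2 := h1.pow 2
  have h := h2.inv (pow_ne_zero 2 hz)
  refine h.congr_deriv ?_
  simp only [Pi.pow_apply]
  field_simp
  ring

lemma deriv_F (A z : ℂ) (hz : 1 - A * z ≠ 0) :
    deriv (fun z => z / (1 - A * z)) z = ((1 - A * z) ^ 2)⁻¹ :=
  (hasDerivAt_F A z hz).deriv

lemma deriv2_F (A z : ℂ) (hz : 1 - A * z ≠ 0) :
    deriv (deriv (fun z => z / (1 - A * z))) z = 2 * A * ((1 - A * z) ^ 3)⁻¹ := by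
  have hopen : IsOpen {z : ℂ | 1 - A * z ≠ 0} :=
    isOpen_ne.preimage (by continuity)
  have hev : deriv (fun z => z / (1 - A * z)) =ᶠ[nhds z]
      fun z => ((1 - A * z) ^ 2)⁻¹ :=
    Filter.eventuallyEq_of_mem (hopen.mem_nhds hz) (fun y hy => deriv_F A y hy)
  rw [hev.deriv_eq]
  exact (hasDerivAt_F' A z hz).deriv

lemma key_ineq (w : ℂ) (hw : ‖w‖ < 1 / 3) :
    ‖2 * w / (1 - w)‖ < (1 + 2 * w / (1 - w)).re := by
  have hw1 : ‖w‖ < 1 := lt_trans hw (by norm_num)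
  have hd : (1 : ℂ) - w ≠ 0 := by
    intro h
    have : w = 1 := by linear_combination -h
    simp [this] at hw1
  have heq : 1 + 2 * w / (1 - w) = (1 + w) / (1 - w) := by
    field_simp
    ring
  rw [heq]
  set r := ‖w‖ with hr
  set d := ‖1 - w‖ with hdd
  have hd0 : 0 < d := norm_pos_iff.mpr hd
  have habs : ‖2 * w / (1 - w)‖ = 2 * r / d := by
    rw [norm_div, norm_mul]
    norm_num
    rfl
  have hre : ((1 + w) / (1 - w)).re = (1 - r ^ 2) / d ^ 2 := by
    rw [Complex.div_re]
    rw [← Complex.sq_norm, ← hdd]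
    have : (1 + w).re * (1 - w).re + (1 + w).im * (1 - w).im
        = 1 - r ^ 2 := by
      simp only [Complex.add_re, Complex.one_re, Complex.sub_re, Complex.add_im,
        Complex.one_im, Complex.sub_im, hr]
      rw [Complex.sq_norm, Complex.normSq_apply]
      ring
    rw [← add_div, this]
  rw [habs, hre, div_lt_div_iff₀ hd0 (by positivity)]
  have hdle : d ≤ 1 + r := by
    have := norm_sub_le (1 : ℂ) w
    simpa [hdd, hr] using this
  have hr0 : 0 ≤ r := norm_nonneg _
  have h1 : 2 * r * d ^ 2 ≤ 2 * r * (1 + r) * d := by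
    nlinarith [mul_nonneg hr0 hd0.le]
  have h2 : 2 * r * (1 + r) * d < (1 - r ^ 2) * d := by
    nlinarith [mul_pos hd0 (mul_pos (show (0:ℝ) < 1 + r by linarith)
      (show (0:ℝ) < 1 - 3 * r by linarith))]
  linarith

/-- z/(1 - Az) is uniformly convex iff |A| ≤ 1/3. -/
theorem ucv_linear_fractional_iff (A : ℂ) (hA : ‖A‖ < 1) :
    IsUCV (fun z => z / (1 - A * z)) ↔ ‖A‖ ≤ 1 / 3 := by
  have hden : ∀ z ∈ unitDisk, 1 - A * z ≠ 0 := by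
    intro z hz h
    have hz1 : ‖z‖ < 1 := mem_unitDisk.mp hz
    have h1 : A * z = 1 := by linear_combination -h
    have : ‖A * z‖ = 1 := by rw [h1]; simp
    rw [norm_mul] at this
    nlinarith [norm_nonneg z, norm_nonneg A]
  constructor
  · rintro ⟨-, -, hineq⟩
    by_contra hcon
    push_neg at hcon
    have hA0 : A ≠ 0 := by
      intro h0
      rw [h0] at hcon
      simp at hcon
      linarith
    have habsA : 0 < ‖A‖ := norm_pos_iff.mpr hA0
    obtain ⟨t, ht1, ht2⟩ : ∃ t : ℝ, 1 / 3 < t ∧ t < ‖A‖ :=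
      ⟨(1 / 3 + ‖A‖) / 2, by linarith, by linarith⟩
    have ht0 : (0 : ℝ) < t := by linarith
    obtain ⟨z, hzdef⟩ : ∃ z : ℂ, z = -(t : ℂ) / A := ⟨_, rfl⟩
    have hAz : A * z = -(t : ℂ) := by
      rw [hzdef]; field_simp
    have hzmem : z ∈ unitDisk := by
      rw [mem_unitDisk, hzdef, norm_div, norm_neg, Complex.norm_real, Real.norm_eq_abs,
        abs_of_pos ht0, div_lt_one habsA]
      exact ht2
    have hdeq : (1 : ℂ) - A * z = ((1 + t : ℝ) : ℂ) := by
      rw [hAz]; push_cast; ring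
    have hd : (1 : ℂ) - A * z ≠ 0 := by
      rw [hdeq]
      exact_mod_cast Complex.ofReal_ne_zero.mpr (by linarith)
    have h1t : (0 : ℝ) < 1 + t := by linarith
    have h1tc : ((1 + t : ℝ) : ℂ) ≠ 0 := Complex.ofReal_ne_zero.mpr (by linarith)
    have hexpr : z * deriv (deriv (fun z => z / (1 - A * z))) z /
        deriv (fun z => z / (1 - A * z)) z = ((-2 * t / (1 + t) : ℝ) : ℂ) := by
      rw [deriv2_F A z hd, deriv_F A z hd]
      have hgen : z * (2 * A * ((1 - A * z) ^ 3)⁻¹) / ((1 - A * z) ^ 2)⁻¹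
          = 2 * (A * z) / (1 - A * z) := by
        field_simp
      rw [hgen, hAz]
      push_cast
      ring
    specialize hineq z hzmem
    rw [hexpr, Complex.norm_real, Real.norm_eq_abs, Complex.add_re, Complex.one_re,
      Complex.ofReal_re] at hineq
    have habs2 : |(-2 * t / (1 + t))| = 2 * t / (1 + t) := by
      rw [abs_div, abs_of_pos h1t, abs_of_nonpos (by linarith)]
      ring
    rw [habs2] at hineq
    have hneg : -2 * t / (1 + t) = -(2 * t / (1 + t)) := by ring
    rw [hneg] at hineq
    have h4 : 4 * t / (1 + t) < 1 := by
      rw [show (4 : ℝ) * t = 2 * t + 2 * t by ring, add_div]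
      linarith
    rw [div_lt_one h1t] at h4
    linarith
  · intro hA3
    refine ⟨⟨?_, ?_, ?_⟩, ?_, ?_⟩
    · intro z hz
      exact ((hasDerivAt_F A z (hden z hz)).differentiableAt).differentiableWithinAt
    · simp
    · rw [deriv_F A 0 (by simp)]; simp
    · intro z1 h1 z2 h2 heq
      have d1 := hden z1 h1
      have d2 := hden z2 h2
      simp only at heq
      rw [div_eq_div_iff d1 d2] at heq
      linear_combination heq
    · intro z hz
      have d := hden z hz
      rw [deriv2_F A z d, deriv_F A z d]
      have hexpr : z * (2 * A * ((1 - A * z) ^ 3)⁻¹) / ((1 - A * z) ^ 2)⁻¹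
          = 2 * (A * z) / (1 - A * z) := by
        field_simp
      rw [hexpr]
      apply key_ineq
      have hz1 : ‖z‖ < 1 := mem_unitDisk.mp hz
      rw [norm_mul]
      nlinarith [norm_nonneg z, norm_nonneg A]
end
end
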